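/- Let u, v, c ∈ ℂ with u − v ≠ 1, u + v ≠ 1, c² ≠ (u−1)² and c² ≠ (v−1)². Define R(x) = [[1,0,0,0],[0,r(x),1−r(x),0],[0,1−r(x),r(x),0],[0,0,0,1]] with r(x) = x/(x−1), and for x ∈ {u, v} define K(x) = I₄ + k(x)·(−E₂₂ + E₂₃ + E₃₂ − E₃₃) where k(x) = 2x/(c² − (x−1)²). Then the rational reflection equation for a vector boundary holds on ℂ²⊗ℂ²⊗ℂ²: R₁₂(u−v)·K₁₃(u)·R₁₂(u+v)·K₂₃(v) = K₂₃(v)·R₁₂(u+v)·K₁₃(u)·R₁₂(u−v) as 8×8 complex matrices. -/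

import Mathlib

open Matrix

/-- Lexicographic pairing of two `Fin 2` indices into a `Fin 4` index. -/
def pair2 (a b : Fin 2) : Fin 4 :=
  ⟨2 * a.val + b.val, by have := a.isLt; have := b.isLt; omega⟩

/-- `A₁₂ = A ⊗ I₂`: action of a 4×4 matrix on factors 1,2 of ℂ²⊗ℂ²⊗ℂ². -/
noncomputable def op12 (A : Matrix (Fin 4) (Fin 4) ℂ) :
    Matrix (Fin 2 × Fin 2 × Fin 2) (Fin 2 × Fin 2 × Fin 2) ℂ :=
  Matrix.of fun i j =>
    A (pair2 i.1 i.2.1) (pair2 j.1 j.2.1) * (if i.2.2 = j.2.2 then 1 else 0)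

/-- `A₂₃ = I₂ ⊗ A`: action of a 4×4 matrix on factors 2,3 of ℂ²⊗ℂ²⊗ℂ². -/
noncomputable def op23 (A : Matrix (Fin 4) (Fin 4) ℂ) :
    Matrix (Fin 2 × Fin 2 × Fin 2) (Fin 2 × Fin 2 × Fin 2) ℂ :=
  Matrix.of fun i j =>
    (if i.1 = j.1 then (1 : ℂ) else 0) * A (pair2 i.2.1 i.2.2) (pair2 j.2.1 j.2.2)

/-- The 4×4 permutation matrix `P` with `P (x ⊗ y) = y ⊗ x`. -/
noncomputable def P4 : Matrix (Fin 4) (Fin 4) ℂ :=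
  !![1, 0, 0, 0; 0, 0, 1, 0; 0, 1, 0, 0; 0, 0, 0, 1]

/-- `A₁₃ = (P⊗I₂)(I₂⊗A)(P⊗I₂)`: action of a 4×4 matrix on factors 1,3. -/
noncomputable def op13 (A : Matrix (Fin 4) (Fin 4) ℂ) :
    Matrix (Fin 2 × Fin 2 × Fin 2) (Fin 2 × Fin 2 × Fin 2) ℂ :=
  op12 P4 * op23 A * op12 P4

/-- Rational R-matrix of the Yangian `Y(sl2)`. -/
noncomputable def Rr (x : ℂ) : Matrix (Fin 4) (Fin 4) ℂ :=
  let r : ℂ := x / (x - 1)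
  !![1, 0, 0, 0;
     0, r, 1 - r, 0;
     0, 1 - r, r, 0;
     0, 0, 0, 1]

/-- Vector-boundary reflection matrix for `Y(sl2)`. -/
noncomputable def Krv (c x : ℂ) : Matrix (Fin 4) (Fin 4) ℂ :=
  1 + (2 * x / (c ^ 2 - (x - 1) ^ 2)) •
    !![0, 0, 0, 0; 0, -1, 1, 0; 0, 1, -1, 0; 0, 0, 0, 0]


noncomputable def Rp (x : ℂ) : Matrix (Fin 4) (Fin 4) ℂ :=
  !![x - 1, 0, 0, 0; 0, x, -1, 0; 0, -1, x, 0; 0, 0, 0, x - 1]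

noncomputable def Kp (c x : ℂ) : Matrix (Fin 4) (Fin 4) ℂ :=
  !![c ^ 2 - (x - 1) ^ 2, 0, 0, 0;
     0, c ^ 2 - (x - 1) ^ 2 - 2 * x, 2 * x, 0;
     0, 2 * x, c ^ 2 - (x - 1) ^ 2 - 2 * x, 0;
     0, 0, 0, c ^ 2 - (x - 1) ^ 2]

@[simp] lemma Rp_00 (x : ℂ) : Rp x 0 0 = x-1 := by norm_num [Rp, Matrix.vecHead, Matrix.vecTail]
@[simp] lemma Rp_01 (x : ℂ) : Rp x 0 1 = 0 := by norm_num [Rp, Matrix.vecHead, Matrix.vecTail]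
@[simp] lemma Rp_02 (x : ℂ) : Rp x 0 2 = 0 := by norm_num [Rp, Matrix.vecHead, Matrix.vecTail, Matrix.cons_val_two, Matrix.cons_val_three]
@[simp] lemma Rp_03 (x : ℂ) : Rp x 0 3 = 0 := by norm_num [Rp, Matrix.vecHead, Matrix.vecTail, Matrix.cons_val_two, Matrix.cons_val_three]
@[simp] lemma Rp_10 (x : ℂ) : Rp x 1 0 = 0 := by norm_num [Rp, Matrix.vecHead, Matrix.vecTail]
@[simp] lemma Rp_11 (x : ℂ) : Rp x 1 1 = x := by norm_num [Rp, Matrix.vecHead, Matrix.vecTail]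
@[simp] lemma Rp_12 (x : ℂ) : Rp x 1 2 = -1 := by norm_num [Rp, Matrix.vecHead, Matrix.vecTail, Matrix.cons_val_two, Matrix.cons_val_three]
@[simp] lemma Rp_13 (x : ℂ) : Rp x 1 3 = 0 := by norm_num [Rp, Matrix.vecHead, Matrix.vecTail, Matrix.cons_val_two, Matrix.cons_val_three]
@[simp] lemma Rp_20 (x : ℂ) : Rp x 2 0 = 0 := by norm_num [Rp, Matrix.vecHead, Matrix.vecTail, Matrix.cons_val_two, Matrix.cons_val_three]
@[simp] lemma Rp_21 (x : ℂ) : Rp x 2 1 = -1 := by norm_num [Rp, Matrix.vecHead, Matrix.vecTail, Matrix.cons_val_two, Matrix.cons_val_three]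
@[simp] lemma Rp_22 (x : ℂ) : Rp x 2 2 = x := by norm_num [Rp, Matrix.vecHead, Matrix.vecTail, Matrix.cons_val_two, Matrix.cons_val_three]
@[simp] lemma Rp_23 (x : ℂ) : Rp x 2 3 = 0 := by norm_num [Rp, Matrix.vecHead, Matrix.vecTail, Matrix.cons_val_two, Matrix.cons_val_three]
@[simp] lemma Rp_30 (x : ℂ) : Rp x 3 0 = 0 := by norm_num [Rp, Matrix.vecHead, Matrix.vecTail, Matrix.cons_val_two, Matrix.cons_val_three]
@[simp] lemma Rp_31 (x : ℂ) : Rp x 3 1 = 0 := by norm_num [Rp, Matrix.vecHead, Matrix.vecTail, Matrix.cons_val_two, Matrix.cons_val_three]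
@[simp] lemma Rp_32 (x : ℂ) : Rp x 3 2 = 0 := by norm_num [Rp, Matrix.vecHead, Matrix.vecTail, Matrix.cons_val_two, Matrix.cons_val_three]
@[simp] lemma Rp_33 (x : ℂ) : Rp x 3 3 = x-1 := by norm_num [Rp, Matrix.vecHead, Matrix.vecTail, Matrix.cons_val_two, Matrix.cons_val_three]
@[simp] lemma Kp_00 (c x : ℂ) : Kp c x 0 0 = c^2-(x-1)^2 := by norm_num [Kp, Matrix.vecHead, Matrix.vecTail]
@[simp] lemma Kp_01 (c x : ℂ) : Kp c x 0 1 = 0 := by norm_num [Kp, Matrix.vecHead, Matrix.vecTail]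
@[simp] lemma Kp_02 (c x : ℂ) : Kp c x 0 2 = 0 := by norm_num [Kp, Matrix.vecHead, Matrix.vecTail, Matrix.cons_val_two, Matrix.cons_val_three]
@[simp] lemma Kp_03 (c x : ℂ) : Kp c x 0 3 = 0 := by norm_num [Kp, Matrix.vecHead, Matrix.vecTail, Matrix.cons_val_two, Matrix.cons_val_three]
@[simp] lemma Kp_10 (c x : ℂ) : Kp c x 1 0 = 0 := by norm_num [Kp, Matrix.vecHead, Matrix.vecTail]
@[simp] lemma Kp_11 (c x : ℂ) : Kp c x 1 1 = c^2-(x-1)^2-2*x := by norm_num [Kp, Matrix.vecHead, Matrix.vecTail]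
@[simp] lemma Kp_12 (c x : ℂ) : Kp c x 1 2 = 2*x := by norm_num [Kp, Matrix.vecHead, Matrix.vecTail, Matrix.cons_val_two, Matrix.cons_val_three]
@[simp] lemma Kp_13 (c x : ℂ) : Kp c x 1 3 = 0 := by norm_num [Kp, Matrix.vecHead, Matrix.vecTail, Matrix.cons_val_two, Matrix.cons_val_three]
@[simp] lemma Kp_20 (c x : ℂ) : Kp c x 2 0 = 0 := by norm_num [Kp, Matrix.vecHead, Matrix.vecTail, Matrix.cons_val_two, Matrix.cons_val_three]
@[simp] lemma Kp_21 (c x : ℂ) : Kp c x 2 1 = 2*x := by norm_num [Kp, Matrix.vecHead, Matrix.vecTail, Matrix.cons_val_two, Matrix.cons_val_three]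
@[simp] lemma Kp_22 (c x : ℂ) : Kp c x 2 2 = c^2-(x-1)^2-2*x := by norm_num [Kp, Matrix.vecHead, Matrix.vecTail, Matrix.cons_val_two, Matrix.cons_val_three]
@[simp] lemma Kp_23 (c x : ℂ) : Kp c x 2 3 = 0 := by norm_num [Kp, Matrix.vecHead, Matrix.vecTail, Matrix.cons_val_two, Matrix.cons_val_three]
@[simp] lemma Kp_30 (c x : ℂ) : Kp c x 3 0 = 0 := by norm_num [Kp, Matrix.vecHead, Matrix.vecTail, Matrix.cons_val_two, Matrix.cons_val_three]
@[simp] lemma Kp_31 (c x : ℂ) : Kp c x 3 1 = 0 := by norm_num [Kp, Matrix.vecHead, Matrix.vecTail, Matrix.cons_val_two, Matrix.cons_val_three]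
@[simp] lemma Kp_32 (c x : ℂ) : Kp c x 3 2 = 0 := by norm_num [Kp, Matrix.vecHead, Matrix.vecTail, Matrix.cons_val_two, Matrix.cons_val_three]
@[simp] lemma Kp_33 (c x : ℂ) : Kp c x 3 3 = c^2-(x-1)^2 := by norm_num [Kp, Matrix.vecHead, Matrix.vecTail, Matrix.cons_val_two, Matrix.cons_val_three]

@[simp] lemma pair2_00 : pair2 0 0 = 0 := rfl
@[simp] lemma pair2_01 : pair2 0 1 = 1 := rfl
@[simp] lemma pair2_10 : pair2 1 0 = 2 := rfl
@[simp] lemma pair2_11 : pair2 1 1 = 3 := rfl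

set_option maxHeartbeats 1600000 in
lemma op13_apply (A : Matrix (Fin 4) (Fin 4) ℂ) :
    op13 A = Matrix.of fun i j =>
      (if i.2.1 = j.2.1 then (1 : ℂ) else 0) * A (pair2 i.1 i.2.2) (pair2 j.1 j.2.2) := by
  ext ⟨a, b, e⟩ ⟨d, g, f⟩
  fin_cases a <;> fin_cases b <;> fin_cases e <;> fin_cases d <;> fin_cases g <;>
    fin_cases f <;>
  simp [op13, op12, op23, P4, pair2, Matrix.mul_apply, Fintype.sum_prod_type,
    Fin.sum_univ_two, Matrix.vecHead, Matrix.vecTail]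

lemma op12_smul (s : ℂ) (A : Matrix (Fin 4) (Fin 4) ℂ) :
    op12 (s • A) = s • op12 A := by
  ext i j; simp [op12, mul_assoc]

lemma op23_smul (s : ℂ) (A : Matrix (Fin 4) (Fin 4) ℂ) :
    op23 (s • A) = s • op23 A := by
  ext i j; simp [op23, mul_assoc]; try ring

lemma op13_smul (s : ℂ) (A : Matrix (Fin 4) (Fin 4) ℂ) :
    op13 (s • A) = s • op13 A := by
  simp [op13, op23_smul, Matrix.mul_smul, Matrix.smul_mul]

lemma Rr_eq' (x : ℂ) (hx : x - 1 ≠ 0) : (x - 1) • Rr x = Rp x := by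
  ext i j
  fin_cases i <;> fin_cases j <;>
    · norm_num [Rr, Rp, Matrix.smul_apply, Matrix.vecHead, Matrix.vecTail]
      try field_simp
      try ring

lemma Krv_eq' (c x : ℂ) (hx : c ^ 2 - (x - 1) ^ 2 ≠ 0) :
    (c ^ 2 - (x - 1) ^ 2) • Krv c x = Kp c x := by
  ext i j
  fin_cases i <;> fin_cases j <;>
    · norm_num [Krv, Kp, Matrix.smul_apply, Matrix.one_apply, Matrix.vecHead,
        Matrix.vecTail, Fin.ext_iff]
      try field_simp
      try ring

set_option maxHeartbeats 6400000 in
lemma key (u v c : ℂ) :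
    op12 (Rp (u - v)) * op13 (Kp c u) * op12 (Rp (u + v)) * op23 (Kp c v) =
      op23 (Kp c v) * op12 (Rp (u + v)) * op13 (Kp c u) * op12 (Rp (u - v)) := by
  ext ⟨a, b, e⟩ ⟨d, g, f⟩
  fin_cases a <;> fin_cases b <;> fin_cases e <;> fin_cases d <;> fin_cases g <;>
    fin_cases f <;>
  · simp only [op13_apply, op12, op23, Matrix.mul_apply, Fintype.sum_prod_type,
      Fin.sum_univ_two, Matrix.of_apply, Fin.zero_eta, Fin.mk_one,
      pair2_00, pair2_01, pair2_10, pair2_11,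
      Rp_00, Rp_01, Rp_02, Rp_03, Rp_10, Rp_11, Rp_12, Rp_13, Rp_20, Rp_21,
      Rp_22, Rp_23, Rp_30, Rp_31, Rp_32, Rp_33, Kp_00, Kp_01, Kp_02, Kp_03,
      Kp_10, Kp_11, Kp_12, Kp_13, Kp_20, Kp_21, Kp_22, Kp_23, Kp_30, Kp_31,
      Kp_32, Kp_33, reduceIte, Fin.isValue, one_ne_zero, zero_ne_one,
      if_true, if_false, mul_zero, zero_mul, mul_one, one_mul, add_zero,
      zero_add]
    try ring

/-- The vector-boundary K-matrix of `Y(sl2)` satisfies the rational reflection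
equation. -/
theorem stmt8 (u v c : ℂ) (h1 : u - v ≠ 1) (h2 : u + v ≠ 1)
    (hu : c ^ 2 ≠ (u - 1) ^ 2) (hv : c ^ 2 ≠ (v - 1) ^ 2) :
    op12 (Rr (u - v)) * op13 (Krv c u) * op12 (Rr (u + v)) * op23 (Krv c v) =
      op23 (Krv c v) * op12 (Rr (u + v)) * op13 (Krv c u) *
        op12 (Rr (u - v)) := by
  have h1' : u - v - 1 ≠ 0 := fun h => h1 (by linear_combination h)
  have h2' : u + v - 1 ≠ 0 := fun h => h2 (by linear_combination h)
  have hu' : c ^ 2 - (u - 1) ^ 2 ≠ 0 := fun h => hu (by linear_combination h)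
  have hv' : c ^ 2 - (v - 1) ^ 2 ≠ 0 := fun h => hv (by linear_combination h)
  have e1 : Rr (u - v) = (u - v - 1)⁻¹ • Rp (u - v) := by
    rw [← Rr_eq' _ h1', smul_smul, inv_mul_cancel₀ h1', one_smul]
  have e2 : Rr (u + v) = (u + v - 1)⁻¹ • Rp (u + v) := by
    rw [← Rr_eq' _ h2', smul_smul, inv_mul_cancel₀ h2', one_smul]
  have e3 : Krv c u = (c ^ 2 - (u - 1) ^ 2)⁻¹ • Kp c u := by
    rw [← Krv_eq' _ _ hu', smul_smul, inv_mul_cancel₀ hu', one_smul]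
  have e4 : Krv c v = (c ^ 2 - (v - 1) ^ 2)⁻¹ • Kp c v := by
    rw [← Krv_eq' _ _ hv', smul_smul, inv_mul_cancel₀ hv', one_smul]
  rw [e1, e2, e3, e4, op12_smul, op12_smul, op13_smul, op23_smul]
  simp only [Matrix.smul_mul, Matrix.mul_smul, smul_smul]
  rw [key]
  congr 1
  ring
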